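/- Let T be a Kurepa tree. Then there is no sequence ⟨B_α : α < ω1⟩ of countable sets of cofinal branches of T which is increasing (B_ξ ⊆ B_α for ξ ≤ α) and continuous (B_δ = ⋃_{ξ<δ} B_ξ for limit δ) such that the set {δ < ω1 : for every t ∈ T_δ there exists b ∈ B_δ with t ∈ b} contains a club of ω1. -/

import Mathlib

noncomputable section

/-- The first uncountable ordinal ω₁. -/
def omega1 : Ordinal := (Cardinal.aleph 1).ord

/-- `ht` is the height function of the partial order `T`: the strict predecessors of every
element are well-ordered, and `ht t` is the order type of the set of strict predecessors. -/
def HeightFun (T : Type) [PartialOrder T] (ht : T → Ordinal) : Prop :=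
  ∀ t : T, ∃ w : IsWellOrder {s : T // s < t} (· < ·),
    ht t = @Ordinal.type {s : T // s < t} (· < ·) w

/-- The α-th level of `T`: the set of elements of height α. -/
def Level {T : Type} [PartialOrder T] (ht : T → Ordinal) (α : Ordinal) : Set T :=
  {t | ht t = α}

/-- `T` is an ω₁-tree (with height function `ht`): it has cardinality ℵ₁, the strict
predecessors of every element are well-ordered with order type `ht t`, every element has
countable height, and every level `T_α` (α < ω₁) is countable and nonempty. -/
def IsOmega1Tree (T : Type) [PartialOrder T] (ht : T → Ordinal) : Prop :=
  HeightFun T ht ∧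
  Cardinal.mk T = Cardinal.aleph 1 ∧
  (∀ t : T, ht t < omega1) ∧
  (∀ α : Ordinal, α < omega1 → (Level ht α).Countable ∧ (Level ht α).Nonempty)

/-- A branch of `T` is a downward closed chain. -/
def IsBranch {T : Type} [PartialOrder T] (b : Set T) : Prop :=
  IsChain (· ≤ ·) b ∧ ∀ s t : T, t ∈ b → s ≤ t → s ∈ b

/-- A cofinal branch of `T` is a branch meeting every level `T_α`, α < ω₁. -/
def IsCofinalBranch {T : Type} [PartialOrder T] (ht : T → Ordinal) (b : Set T) : Prop :=
  IsBranch b ∧ ∀ α : Ordinal, α < omega1 → ∃ t ∈ b, ht t = α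

/-- The set of cofinal branches of `T`. -/
def CofinalBranches (T : Type) [PartialOrder T] (ht : T → Ordinal) : Set (Set T) :=
  {b | IsCofinalBranch ht b}

/-- The set of cofinal branches of `T` passing through `x`; this set is in natural bijection
with the set of cofinal branches of the cone `T_x`. -/
def BranchesThrough {T : Type} [PartialOrder T] (ht : T → Ordinal) (x : T) : Set (Set T) :=
  {b | IsCofinalBranch ht b ∧ x ∈ b}

/-- A Kurepa tree is an ω₁-tree with at least ℵ₂ cofinal branches. -/
def IsKurepaTree (T : Type) [PartialOrder T] (ht : T → Ordinal) : Prop :=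
  IsOmega1Tree T ht ∧ Cardinal.aleph 2 ≤ Cardinal.mk ↥(CofinalBranches T ht)

/-- `T` is everywhere Kurepa: it is an ω₁-tree and for every `x ∈ T` the cone `T_x` has at
least ℵ₂ cofinal branches, i.e. at least ℵ₂ cofinal branches of `T` pass through `x`. -/
def IsEverywhereKurepa (T : Type) [PartialOrder T] (ht : T → Ordinal) : Prop :=
  IsOmega1Tree T ht ∧ ∀ x : T, Cardinal.aleph 2 ≤ Cardinal.mk ↥(BranchesThrough ht x)

/-- `C` is a club (closed unbounded subset) of ω₁. -/
def IsClubOmega1 (C : Set Ordinal) : Prop :=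
  (∀ α ∈ C, α < omega1) ∧
  (∀ α < omega1, ∃ β ∈ C, α ≤ β) ∧
  (∀ α < omega1, Order.IsSuccLimit α → (∀ β < α, ∃ γ ∈ C, β < γ ∧ γ < α) → α ∈ C)

/-- `T↾A`: the set of elements of `T` whose height lies in `A`. -/
def Restrict (T : Type) [PartialOrder T] (ht : T → Ordinal) (A : Set Ordinal) : Set T :=
  {t | ht t ∈ A}

/-- `T` and `S` are club isomorphic: there is a club `C ⊆ ω₁` such that `T↾C` and `S↾C`
(with the induced orders) are order isomorphic. -/
def ClubIsomorphic (T : Type) [PartialOrder T] (htT : T → Ordinal)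
    (S : Type) [PartialOrder S] (htS : S → Ordinal) : Prop :=
  ∃ C : Set Ordinal, IsClubOmega1 C ∧
    Nonempty (↥(Restrict T htT C) ≃o ↥(Restrict S htS C))

section AuxKurepa

open Cardinal Ordinal

lemma aux_omega1_isLimit : Order.IsSuccLimit omega1 :=
  Cardinal.isSuccLimit_ord (Cardinal.aleph0_le_aleph 1)

lemma aux_omega1_pos : 0 < omega1 := aux_omega1_isLimit.pos

lemma aux_card_le_of_lt {c : Cardinal} (h : c < Cardinal.aleph 1) : c ≤ Cardinal.aleph0 := by
  rwa [← Cardinal.succ_aleph0, Order.lt_succ_iff] at h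

lemma aux_countable_toType {x : Ordinal} (hx : x < omega1) : Countable x.ToType := by
  rw [← Cardinal.mk_le_aleph0_iff, Cardinal.mk_toType]
  exact aux_card_le_of_lt (Cardinal.lt_ord.1 hx)

lemma aux_sup_lt {ι : Type} [Countable ι] (f : ι → Ordinal.{0}) (h : ∀ i, f i < omega1) :
    iSup f < omega1 :=
  Ordinal.iSup_lt_ord
    (by rw [show omega1.cof = Cardinal.aleph 1 from Cardinal.isRegular_aleph_one.cof_eq]
        exact Cardinal.mk_le_aleph0.trans_lt Cardinal.aleph0_lt_aleph_one) h

variable {T : Type} [PartialOrder T] {ht : T → Ordinal}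

lemma aux_ht_lt_of_lt (H : HeightFun T ht) {s t : T} (h : s < t) : ht s < ht t := by
  obtain ⟨wt, het⟩ := H t
  obtain ⟨ws, hes⟩ := H s
  haveI := wt; haveI := ws
  have key : ht s = Ordinal.typein (α := {r : T // r < t}) (· < ·) ⟨s, h⟩ := by
    rw [← Ordinal.type_subrel, hes]
    refine RelIso.ordinal_type_eq ?_
    exact {
      toFun := fun r => ⟨⟨r.1, lt_trans r.2 h⟩, by simpa using r.2⟩
      invFun := fun y => ⟨y.1.1, Subtype.coe_lt_coe.2 y.2⟩
      left_inv := fun r => rfl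
      right_inv := fun y => rfl
      map_rel_iff' := by intro a b; simp [Subtype.mk_lt_mk] }
  rw [key, het]
  exact Ordinal.typein_lt_type _ _

lemma aux_le_of_mem_chain (H : HeightFun T ht) {b : Set T} (hb : IsChain (· ≤ ·) b)
    {s t : T} (hs : s ∈ b) (htb : t ∈ b) (hlt : ht s < ht t) : s ≤ t := by
  rcases eq_or_ne s t with rfl | hne
  · exact le_rfl
  rcases hb hs htb hne with h' | h'
  · exact h'
  · exact absurd (aux_ht_lt_of_lt H (lt_of_le_of_ne h' hne.symm)) (asymm hlt)

lemma aux_eq_of_ht_eq (H : HeightFun T ht) {b : Set T} (hb : IsChain (· ≤ ·) b)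
    {s t : T} (hs : s ∈ b) (htb : t ∈ b) (heq : ht s = ht t) : s = t := by
  by_contra hne
  rcases hb hs htb hne with h' | h'
  · exact absurd (aux_ht_lt_of_lt H (lt_of_le_of_ne h' hne)) (by rw [heq]; exact lt_irrefl _)
  · exact absurd (aux_ht_lt_of_lt H (lt_of_le_of_ne h' (Ne.symm hne))) (by rw [heq]; exact lt_irrefl _)

lemma aux_branch_eq (H : HeightFun T ht) {b b' : Set T}
    (hb : IsCofinalBranch ht b) (hb' : IsCofinalBranch ht b')
    (hlt : ∀ t : T, ht t < omega1) (hsub : b ⊆ b') : b = b' := by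
  apply Set.Subset.antisymm hsub
  intro t htb'
  obtain ⟨s, hs, hhs⟩ := hb.2 (ht t) (hlt t)
  have : s = t := aux_eq_of_ht_eq H hb'.1.1 (hsub hs) htb' hhs
  exact this ▸ hs

end AuxKurepa

/-- if `T` is a Kurepa tree, there is no increasing continuous sequence
`⟨B_α : α < ω₁⟩` of countable sets of cofinal branches of `T` such that the set of `δ < ω₁`
at which every node of height `δ` lies on a branch from `B_δ` contains a club of ω₁. -/
theorem kurepa_no_small_branch_capture
    (T : Type) [PartialOrder T] (ht : T → Ordinal) (hT : IsKurepaTree T ht) :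
    ¬ ∃ B : Ordinal → Set (Set T),
      (∀ α < omega1, (B α).Countable ∧ B α ⊆ CofinalBranches T ht) ∧
      (∀ ξ α : Ordinal, ξ ≤ α → α < omega1 → B ξ ⊆ B α) ∧
      (∀ δ < omega1, Order.IsSuccLimit δ → B δ = ⋃ ξ ∈ Set.Iio δ, B ξ) ∧
      (∃ C : Set Ordinal, IsClubOmega1 C ∧
        C ⊆ {δ : Ordinal | ∀ t : T, ht t = δ → ∃ b ∈ B δ, t ∈ b}) := by
  classical
  obtain ⟨hTree, hbig⟩ := hT
  obtain ⟨Hht, _hcard, hlt, _hlev⟩ := hTree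
  rintro ⟨B, hB1, hB2, hB3, C, ⟨hCbd, hCunbd, hCcl⟩, hCsub⟩
  haveI : Nonempty omega1.ToType :=
    Ordinal.toType_nonempty_iff_ne_zero.2 (ne_of_gt aux_omega1_pos)
  set e : Set.Iio omega1 ≃o omega1.ToType := Ordinal.ToType.mk with he
  set U : Set (Set T) := ⋃ i : omega1.ToType, B ((e.symm i) : Set.Iio omega1).1 with hU
  have hUsub : ∀ α : Ordinal, α < omega1 → B α ⊆ U := by
    intro α hα
    have h1 : B α = B ((e.symm (e ⟨α, hα⟩)) : Set.Iio omega1).1 := by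
      rw [OrderIso.symm_apply_apply]
    rw [hU, h1]
    exact Set.subset_iUnion (fun i => B ((e.symm i) : Set.Iio omega1).1) (e ⟨α, hα⟩)
  have hUcard : Cardinal.mk U < Cardinal.aleph 2 := by
    have h1 : Cardinal.mk U ≤ Cardinal.mk omega1.ToType *
        ⨆ i, Cardinal.mk (B ((e.symm i) : Set.Iio omega1).1) := Cardinal.mk_iUnion_le _
    have h2 : Cardinal.mk omega1.ToType = Cardinal.aleph 1 := by
      rw [Cardinal.mk_toType]; exact Cardinal.card_ord _
    have h3 : (⨆ i, Cardinal.mk (B ((e.symm i) : Set.Iio omega1).1)) ≤ Cardinal.aleph0 := by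
      refine ciSup_le' fun i => ?_
      haveI := ((hB1 _ (Set.mem_Iio.1 (e.symm i).2)).1).to_subtype
      exact Cardinal.mk_le_aleph0
    calc Cardinal.mk U ≤ _ := h1
      _ ≤ Cardinal.aleph 1 * Cardinal.aleph0 := mul_le_mul' (le_of_eq h2) h3
      _ = Cardinal.aleph 1 := by
          rw [Cardinal.mul_eq_max (Cardinal.aleph0_le_aleph 1) le_rfl]
          exact max_eq_left (Cardinal.aleph0_le_aleph 1)
      _ < Cardinal.aleph 2 := Cardinal.aleph_lt_aleph.2 one_lt_two
  have hex : ∃ b, IsCofinalBranch ht b ∧ b ∉ U := by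
    by_contra hcon
    push_neg at hcon
    have hsub : CofinalBranches T ht ⊆ U := fun b hb => hcon b hb
    exact absurd (hbig.trans (Cardinal.mk_le_mk_of_subset hsub)) (not_le.2 hUcard)
  obtain ⟨b, hb, hbU⟩ := hex
  have key : ∃ ξ, ξ < omega1 ∧ ∃ b', b' ∈ B ξ ∧
      ∀ β, β < omega1 → ∃ δ, β < δ ∧ δ < omega1 ∧ ∀ s ∈ b, ht s < δ → s ∈ b' := by
    by_contra hcon
    push_neg at hcon
    -- hcon : ∀ ξ, ξ < omega1 → ∀ b' ∈ B ξ, ∃ β, β < omega1 ∧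
    --        ∀ δ, β < δ → δ < omega1 → ∃ s ∈ b, ht s < δ ∧ s ∉ b'
    set gfun : Ordinal → Set T → Ordinal := fun ξ b' =>
      if h : ξ < omega1 ∧ b' ∈ B ξ then (hcon ξ h.1 b' h.2).choose else 0 with hgfun
    have hgdef : ∀ ξ b', ξ < omega1 → b' ∈ B ξ → (gfun ξ b' < omega1 ∧
        ∀ δ, gfun ξ b' < δ → δ < omega1 → ∃ s ∈ b, ht s < δ ∧ s ∉ b') := by
      intro ξ b' hξ hb'
      have h : ξ < omega1 ∧ b' ∈ B ξ := ⟨hξ, hb'⟩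
      rw [hgfun]
      simp only [dif_pos h]
      exact (hcon ξ h.1 b' h.2).choose_spec
    have hglt : ∀ ξ b', gfun ξ b' < omega1 := by
      intro ξ b'
      by_cases h : ξ < omega1 ∧ b' ∈ B ξ
      · exact (hgdef ξ b' h.1 h.2).1
      · rw [hgfun]; simp only [dif_neg h]; exact aux_omega1_pos
    -- step function along C
    have hstep : ∀ x ∈ C, ∃ γ, γ ∈ C ∧ x < γ ∧
        ∀ ξ ≤ x, ∀ b' ∈ B ξ, gfun ξ b' < γ := by
      intro x hx
      have hxlt : x < omega1 := hCbd x hx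
      have hx1 : x + 1 < omega1 := by
        rw [Ordinal.add_one_eq_succ]; exact aux_omega1_isLimit.succ_lt hxlt
      haveI : Countable (x + 1).ToType := aux_countable_toType hx1
      haveI : Countable ↥(B x) := ((hB1 x hxlt).1).to_subtype
      set f : (x + 1).ToType × ↥(B x) → Ordinal := fun p =>
        gfun ((((Ordinal.ToType.mk (o := x + 1))).symm p.1 : Set.Iio (x + 1)) : Ordinal) p.2.1
        with hf
      have hS : iSup f < omega1 := aux_sup_lt f (fun p => hglt _ _)
      have hm : max x (iSup f) + 1 < omega1 := by
        rw [Ordinal.add_one_eq_succ]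
        exact aux_omega1_isLimit.succ_lt (max_lt hxlt hS)
      obtain ⟨γ, hγC, hγ⟩ := hCunbd (max x (iSup f) + 1) hm
      have hmax : max x (iSup f) < γ := by
        have h01 := Order.lt_succ (max x (iSup f))
        rw [← Ordinal.add_one_eq_succ] at h01
        exact lt_of_lt_of_le h01 hγ
      refine ⟨γ, hγC, lt_of_le_of_lt (le_max_left _ _) hmax, ?_⟩
      intro ξ hξ b' hb'
      have hb'x : b' ∈ B x := hB2 ξ x hξ hxlt hb'
      have hξx1 : ξ < x + 1 := by
        rw [Ordinal.add_one_eq_succ]; exact Order.lt_succ_iff.2 hξ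
      set p : (x + 1).ToType × ↥(B x) :=
        ((Ordinal.ToType.mk (o := x + 1)) ⟨ξ, hξx1⟩, ⟨b', hb'x⟩) with hp
      have hfp : f p = gfun ξ b' := by
        rw [hf, hp]; simp only [OrderIso.symm_apply_apply]
      calc gfun ξ b' = f p := hfp.symm
        _ ≤ iSup f := le_ciSup (Ordinal.bddAbove_range f) p
        _ ≤ max x (iSup f) := le_max_right _ _
        _ < γ := hmax
    -- build the ω-chain
    obtain ⟨γ0, hγ0C, _⟩ := hCunbd 0 aux_omega1_pos
    set F : {x // x ∈ C} → {x // x ∈ C} := fun p =>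
      ⟨(hstep p.1 p.2).choose, (hstep p.1 p.2).choose_spec.1⟩ with hF
    set D : ℕ → {x // x ∈ C} := fun n => F^[n] ⟨γ0, hγ0C⟩ with hD
    have hDsucc : ∀ n, D (n + 1) = F (D n) := fun n =>
      Function.iterate_succ_apply' F n _
    have hDlt : ∀ n, (D n).1 < (D (n + 1)).1 := by
      intro n; rw [hDsucc]
      exact (hstep (D n).1 (D n).2).choose_spec.2.1
    have hDg : ∀ n, ∀ ξ ≤ (D n).1, ∀ b' ∈ B ξ, gfun ξ b' < (D (n + 1)).1 := by
      intro n ξ hξ b' hb'; rw [hDsucc]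
      exact (hstep (D n).1 (D n).2).choose_spec.2.2 ξ hξ b' hb'
    set δs : Ordinal := ⨆ n, (D n).1 with hδs
    have hDδ : ∀ n, (D n).1 < δs := fun n =>
      lt_of_lt_of_le (hDlt n) (le_ciSup (Ordinal.bddAbove_range _) (n + 1))
    have hδslt : δs < omega1 := aux_sup_lt _ (fun n => hCbd _ (D n).2)
    have hlim : Order.IsSuccLimit δs := by
      refine Ordinal.isSuccLimit_iff.2 ⟨?_, Order.isSuccPrelimit_of_succ_lt ?_⟩
      · exact ne_of_gt (lt_of_le_of_lt (zero_le (a := (D 0).1)) (hDδ 0))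
      · intro a ha
        obtain ⟨n, hn⟩ := Ordinal.lt_iSup_iff.1 ha
        exact lt_of_le_of_lt (Order.succ_le_of_lt hn) (hDδ n)
    have hδsC : δs ∈ C := by
      refine hCcl δs hδslt hlim ?_
      intro β hβ
      obtain ⟨n, hn⟩ := Ordinal.lt_iSup_iff.1 hβ
      exact ⟨(D (n + 1)).1, (D (n + 1)).2, lt_trans hn (hDlt n), hDδ (n + 1)⟩
    obtain ⟨t, htb, htht⟩ := hb.2 δs hδslt
    obtain ⟨b', hb'B, htb'⟩ := hCsub hδsC t htht
    rw [hB3 δs hδslt hlim] at hb'B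
    obtain ⟨ξ1, hξ1, hb'⟩ := Set.mem_iUnion₂.1 hb'B
    have hξ1δ : ξ1 < δs := hξ1
    have hξ1lt : ξ1 < omega1 := lt_trans hξ1δ hδslt
    obtain ⟨n, hn⟩ := Ordinal.lt_iSup_iff.1 hξ1δ
    have hgb : gfun ξ1 b' < δs :=
      lt_trans (hDg n ξ1 (le_of_lt hn) b' hb') (hDδ (n + 1))
    obtain ⟨s, hsb, hslt, hsnb⟩ := (hgdef ξ1 b' hξ1lt hb').2 δs hgb hδslt
    have hst : s ≤ t := aux_le_of_mem_chain Hht hb.1.1 hsb htb (by rw [htht]; exact hslt)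
    have hb'branch : IsCofinalBranch ht b' := (hB1 ξ1 hξ1lt).2 hb'
    exact hsnb (hb'branch.1.2 s t htb' hst)
  obtain ⟨ξ0, hξ0, b', hb'B, hcap⟩ := key
  have hsub2 : b ⊆ b' := by
    intro s hs
    obtain ⟨δ, hβδ, hδlt, hδcap⟩ := hcap (ht s) (hlt s)
    exact hδcap s hs hβδ
  have hb'cof : IsCofinalBranch ht b' := (hB1 ξ0 hξ0).2 hb'B
  have hbb' : b = b' := aux_branch_eq Hht hb hb'cof hlt hsub2
  exact hbU (hbb' ▸ hUsub ξ0 hξ0 hb'B)
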